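/- Let 0 < α < π/4 and q ∈ [0,1]. Define g(β) = −2·q·log(cos(α − β)) − 2·(1 − q)·log(cos(α + β)) for β in the open interval (α − π/2, π/2 − α), and set β* = (1/2)·arcsin((2q − 1)·sin(2α)). Then β* lies in the interval (α − π/2, π/2 − α), β* satisfies sin(2β*) = (2q − 1)·sin(2α), and g(β*) ≤ g(β) for every β in the interval; that is, the minimum of g over the interval is attained at the point β* characterized by sin(2β) = (2q − 1)·sin(2α). -/

import Mathlib

open Real

/-- The minimum of `g(β) = −2q log cos(α−β) − 2(1−q) log cos(α+β)` over the interval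
`(α − π/2, π/2 − α)` is attained at the point `β* = (1/2) arcsin((2q−1) sin 2α)`,
characterized by `sin 2β = (2q − 1) sin 2α`. -/
theorem stmt10 (α : ℝ) (hα1 : 0 < α) (hα2 : α < Real.pi / 4)
    (q : ℝ) (hq0 : 0 ≤ q) (hq1 : q ≤ 1) :
    let g : ℝ → ℝ := fun β =>
      -2 * q * Real.log (Real.cos (α - β)) - 2 * (1 - q) * Real.log (Real.cos (α + β))
    let βs : ℝ := (1 / 2) * Real.arcsin ((2 * q - 1) * Real.sin (2 * α))
    α - Real.pi / 2 < βs ∧ βs < Real.pi / 2 - α ∧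
      Real.sin (2 * βs) = (2 * q - 1) * Real.sin (2 * α) ∧
      ∀ β : ℝ, α - Real.pi / 2 < β → β < Real.pi / 2 - α → g βs ≤ g β := by
  intro g βs
  have hπ := Real.pi_pos
  have hβs : βs = (1 / 2) * Real.arcsin ((2 * q - 1) * Real.sin (2 * α)) := rfl
  set m : ℝ := Real.sin (2 * α) with hm
  set s : ℝ := 2 * q - 1 with hs
  have hm0 : 0 < m := Real.sin_pos_of_pos_of_lt_pi (by linarith) (by linarith)
  have hm1 : m ≤ 1 := Real.sin_le_one _
  have hs1 : -1 ≤ s := by rw [hs]; linarith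
  have hs2 : s ≤ 1 := by rw [hs]; linarith
  have hsm1 : -1 ≤ s * m := by nlinarith
  have hsm2 : s * m ≤ 1 := by nlinarith
  have h2βs : 2 * βs = Real.arcsin (s * m) := by rw [hβs]; ring
  have hsin2βs : Real.sin (2 * βs) = s * m := by
    rw [h2βs, Real.sin_arcsin hsm1 hsm2]
  have harcsin_m : Real.arcsin m = 2 * α := by
    rw [hm]; exact Real.arcsin_sin (by linarith) (by linarith)
  have hupper : 2 * βs ≤ 2 * α := by
    rw [h2βs, ← harcsin_m]
    exact Real.monotone_arcsin (by nlinarith)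
  have hlower : -(2 * α) ≤ 2 * βs := by
    rw [h2βs, ← harcsin_m, ← Real.arcsin_neg]
    exact Real.monotone_arcsin (by nlinarith)
  have hβs1 : α - Real.pi / 2 < βs := by linarith
  have hβs2 : βs < Real.pi / 2 - α := by linarith
  refine ⟨hβs1, hβs2, hsin2βs, ?_⟩
  -- cosines are positive on the interval
  have hcos1 : ∀ x : ℝ, α - Real.pi / 2 < x → x < Real.pi / 2 - α →
      0 < Real.cos (α - x) := by
    intro x h1 h2
    apply Real.cos_pos_of_mem_Ioo
    rw [Set.mem_Ioo]
    constructor <;> linarith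
  have hcos2 : ∀ x : ℝ, α - Real.pi / 2 < x → x < Real.pi / 2 - α →
      0 < Real.cos (α + x) := by
    intro x h1 h2
    apply Real.cos_pos_of_mem_Ioo
    rw [Set.mem_Ioo]
    constructor <;> linarith
  -- derivative of g
  have hderiv : ∀ x : ℝ, α - Real.pi / 2 < x → x < Real.pi / 2 - α →
      HasDerivAt g ((Real.sin (2 * x) - s * m) /
        (Real.cos (α - x) * Real.cos (α + x))) x := by
    intro x h1 h2
    have hc1 := hcos1 x h1 h2
    have hc2 := hcos2 x h1 h2
    have d1 : HasDerivAt (fun y : ℝ => Real.cos (α - y)) (Real.sin (α - x)) x := by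
      have := (Real.hasDerivAt_cos (α - x)).comp x
        (((hasDerivAt_id x).const_sub α))
      simpa [Function.comp_def] using this
    have d2 : HasDerivAt (fun y : ℝ => Real.cos (α + y)) (-Real.sin (α + x)) x := by
      have := (Real.hasDerivAt_cos (α + x)).comp x
        ((hasDerivAt_id x).const_add α)
      simpa [Function.comp_def] using this
    have d3 : HasDerivAt (fun y : ℝ => Real.log (Real.cos (α - y)))
        (Real.sin (α - x) / Real.cos (α - x)) x := by
      have := (Real.hasDerivAt_log hc1.ne').comp x d1
      simpa [div_eq_inv_mul, Function.comp_def] using this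
    have d4 : HasDerivAt (fun y : ℝ => Real.log (Real.cos (α + y)))
        (-Real.sin (α + x) / Real.cos (α + x)) x := by
      have := (Real.hasDerivAt_log hc2.ne').comp x d2
      simpa [div_eq_inv_mul, neg_div, Function.comp_def] using this
    have d5 : HasDerivAt g
        (-2 * q * (Real.sin (α - x) / Real.cos (α - x)) -
          2 * (1 - q) * (-Real.sin (α + x) / Real.cos (α + x))) x :=
      ((d3.const_mul (-2 * q)).sub (d4.const_mul (2 * (1 - q))))
    convert d5 using 1
    rw [hm, hs]
    field_simp
    rw [Real.sin_sub, Real.cos_sub, Real.sin_add, Real.cos_add,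
      Real.sin_two_mul, Real.sin_two_mul]
    linear_combination (-2 * Real.sin x * Real.cos x) * Real.sin_sq_add_cos_sq α +
      (-(2 - 4 * q) * Real.sin α * Real.cos α) * Real.sin_sq_add_cos_sq x
  -- sign of sin 2x - s*m
  have hsign_pos : ∀ x : ℝ, βs < x → x < Real.pi / 2 - α →
      0 < Real.sin (2 * x) - s * m := by
    intro x hx1 hx2
    rcases le_or_gt (2 * x) (Real.pi / 2) with hc | hc
    · have : Real.sin (2 * βs) < Real.sin (2 * x) :=
        Real.sin_lt_sin_of_lt_of_le_pi_div_two (by linarith) hc (by linarith)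
      linarith [hsin2βs ▸ this]
    · have h1 : Real.sin (2 * α) < Real.sin (Real.pi - 2 * x) :=
        Real.sin_lt_sin_of_lt_of_le_pi_div_two (by linarith) (by linarith) (by linarith)
      rw [Real.sin_pi_sub] at h1
      nlinarith
  have hsign_neg : ∀ x : ℝ, α - Real.pi / 2 < x → x < βs →
      Real.sin (2 * x) - s * m < 0 := by
    intro x hx1 hx2
    rcases le_or_gt (-(Real.pi / 2)) (2 * x) with hc | hc
    · have : Real.sin (2 * x) < Real.sin (2 * βs) :=
        Real.sin_lt_sin_of_lt_of_le_pi_div_two hc (by linarith) (by linarith)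
      linarith [hsin2βs ▸ this]
    · have h1 : Real.sin (2 * α) < Real.sin (Real.pi + 2 * x) :=
        Real.sin_lt_sin_of_lt_of_le_pi_div_two (by linarith) (by linarith) (by linarith)
      have h2 : Real.sin (Real.pi + 2 * x) = -Real.sin (2 * x) := by
        simp [Real.sin_add]
      rw [h2] at h1
      nlinarith
  intro β hβ1 hβ2
  rcases lt_trichotomy β βs with hlt | heq | hgt
  · -- g is strictly antitone on [β, βs]
    have hanti : StrictAntiOn g (Set.Icc β βs) := by
      apply strictAntiOn_of_deriv_neg (convex_Icc β βs)
      · intro x hx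
        exact (hderiv x (by linarith [hx.1, hx.2]) (by linarith [hx.1, hx.2])).continuousAt.continuousWithinAt
      · intro x hx
        rw [interior_Icc] at hx
        have ha' : α - Real.pi / 2 < x := by linarith [hx.1, hx.2]
        have hb' : x < Real.pi / 2 - α := by linarith [hx.1, hx.2]
        rw [(hderiv x ha' hb').deriv]
        exact div_neg_of_neg_of_pos (hsign_neg x ha' hx.2)
          (mul_pos (hcos1 x ha' hb') (hcos2 x ha' hb'))
    exact le_of_lt (hanti (Set.left_mem_Icc.2 hlt.le) (Set.right_mem_Icc.2 hlt.le) hlt)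
  · rw [heq]
  · have hmono : StrictMonoOn g (Set.Icc βs β) := by
      apply strictMonoOn_of_deriv_pos (convex_Icc βs β)
      · intro x hx
        exact (hderiv x (by linarith [hx.1, hx.2]) (by linarith [hx.1, hx.2])).continuousAt.continuousWithinAt
      · intro x hx
        rw [interior_Icc] at hx
        have ha' : α - Real.pi / 2 < x := by linarith [hx.1, hx.2]
        have hb' : x < Real.pi / 2 - α := by linarith [hx.1, hx.2]
        rw [(hderiv x ha' hb').deriv]
        exact div_pos (hsign_pos x hx.1 hb')
          (mul_pos (hcos1 x ha' hb') (hcos2 x ha' hb'))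
    exact le_of_lt (hmono (Set.left_mem_Icc.2 hgt.le) (Set.right_mem_Icc.2 hgt.le) hgt)
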